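/- Let m be even and q = 2^m, and let h be a positive integer such that m/gcd(h,m) is odd. Then gcd(e(e-1), q-1) = 1 for e = 2^h + 1. -/

import Mathlib

private lemma dvd_iff_zmod (c n : ℕ) : c ∣ 2 ^ n - 1 ↔ ((2 : ZMod c) ^ n = 1) := by
  rw [← ZMod.natCast_eq_zero_iff]
  have h1 : (1 : ℕ) ≤ 2 ^ n := Nat.one_le_two_pow
  rw [Nat.cast_sub h1]
  push_cast
  constructor
  · intro h; linear_combination h
  · intro h; rw [h]; ring

private lemma dvd_mersenne_gcd (c a b : ℕ) (ha : c ∣ 2 ^ a - 1) (hb : c ∣ 2 ^ b - 1) :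
    c ∣ 2 ^ Nat.gcd a b - 1 := by
  rw [dvd_iff_zmod] at ha hb ⊢
  exact pow_gcd_eq_one.mpr ⟨ha, hb⟩

theorem stmt_5 (m h : ℕ) (hm : Even m) (hpos : 0 < h)
    (hodd : Odd (m / Nat.gcd h m)) :
    Nat.gcd ((2 ^ h + 1) * ((2 ^ h + 1) - 1)) (2 ^ m - 1) = 1 := by
  have hm0 : 0 < m := by
    rcases Nat.eq_zero_or_pos m with rfl | hp
    · simp at hodd
    · exact hp
  set d := Nat.gcd h m with hd
  have hd0 : 0 < d := Nat.gcd_pos_of_pos_left m hpos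
  -- 2^m - 1 is odd
  have hoddq : Odd (2 ^ m - 1) :=
    Nat.Even.sub_odd Nat.one_le_two_pow (Nat.even_pow.mpr ⟨even_two, hm0.ne'⟩) odd_one
  -- gcd(2h, m) = d
  have hg2 : Nat.gcd (2 * h) m = d := by
    have h1 : d ∣ Nat.gcd (2 * h) m :=
      Nat.dvd_gcd (Dvd.dvd.mul_left (Nat.gcd_dvd_left h m) 2) (Nat.gcd_dvd_right h m)
    have h2 : Nat.gcd (2 * h) m ∣ 2 * d := by
      have := Nat.gcd_mul_left 2 h m
      calc Nat.gcd (2 * h) m ∣ Nat.gcd (2 * h) (2 * m) :=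
            Nat.dvd_gcd (Nat.gcd_dvd_left _ _)
              ((Nat.gcd_dvd_right (2*h) m).mul_left 2)
        _ = 2 * d := Nat.gcd_mul_left 2 h m
      -- done
    -- gcd(2h,m) is d or 2d; if 2d then m/d even, contradiction
    rcases h1 with ⟨k, hk⟩
    rcases h2 with ⟨j, hj⟩
    have hg0 : 0 < Nat.gcd (2 * h) m := Nat.gcd_pos_of_pos_right _ hm0
    have hk0 : 0 < k := Nat.pos_of_ne_zero (by rintro rfl; rw [hk] at hg0; simp at hg0)
    have hkj : k * j = 2 := by
      have h3 : d * (k * j) = d * 2 := by rw [← mul_assoc, ← hk, ← hj]; ring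
      exact Nat.eq_of_mul_eq_mul_left hd0 h3
    have hk2 : k ≤ 2 := Nat.le_of_dvd two_pos ⟨j, hkj.symm⟩
    interval_cases k
    · simpa using hk
    · exfalso
      have hdvd : 2 * d ∣ m := by
        have h4 := Nat.gcd_dvd_right (2 * h) m
        rw [hk, mul_comm] at h4
        exact h4
      obtain ⟨t, ht⟩ := hdvd
      have hm2 : m = d * (2 * t) := by rw [ht]; ring
      have : m / d = 2 * t := by rw [hm2, Nat.mul_div_cancel_left _ hd0]
      rw [this] at hodd
      exact (Nat.not_odd_iff_even.mpr ⟨t, (two_mul t)⟩) hodd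
  -- coprimality pieces
  have key : Nat.Coprime (2 ^ h + 1) (2 ^ m - 1) := by
    set c := Nat.gcd (2 ^ h + 1) (2 ^ m - 1) with hc
    have hc1 : c ∣ 2 ^ h + 1 := Nat.gcd_dvd_left _ _
    have hc2 : c ∣ 2 ^ m - 1 := Nat.gcd_dvd_right _ _
    have hc3 : c ∣ 2 ^ (2 * h) - 1 := by
      have : (2 ^ h + 1) ∣ 2 ^ (2 * h) - 1 := by
        have h1 : (1:ℕ) ≤ 2 ^ h := Nat.one_le_two_pow
        have : 2 ^ (2 * h) = (2 ^ h) * (2 ^ h) := by rw [two_mul, pow_add]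
        refine ⟨2 ^ h - 1, ?_⟩
        rw [this]
        obtain ⟨s, hs⟩ := Nat.exists_eq_add_of_le h1
        rw [hs, Nat.add_sub_cancel_left]
        apply Nat.sub_eq_of_eq_add; ring
      exact hc1.trans this
    have hc4 : c ∣ 2 ^ d - 1 := hg2 ▸ dvd_mersenne_gcd c (2 * h) m hc3 hc2
    have hc5 : c ∣ 2 ^ h - 1 := by
      refine hc4.trans ?_
      obtain ⟨s, hs⟩ := Nat.gcd_dvd_left h m
      rw [hs, pow_mul]
      simpa using Nat.sub_dvd_pow_sub_pow (2 ^ d) 1 s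
    have hc6 : c ∣ 2 := by
      have h1 : (1:ℕ) ≤ 2 ^ h := Nat.one_le_two_pow
      have : (2 ^ h + 1) - (2 ^ h - 1) = 2 := by omega
      exact this ▸ Nat.dvd_sub hc1 hc5
    have hcodd : Odd c := by
      rcases Nat.even_or_odd c with he | ho
      · exfalso
        obtain ⟨k, hk⟩ := he
        have h2c : 2 ∣ c := ⟨k, by omega⟩
        have : (2:ℕ) ∣ 2 ^ m - 1 := h2c.trans hc2
        rcases hoddq with ⟨t, ht⟩
        omega
      · exact ho
    rcases (Nat.dvd_prime Nat.prime_two).mp hc6 with h1 | h2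
    · exact h1
    · exfalso
      rw [h2] at hcodd
      exact (Nat.not_odd_iff_even.mpr even_two) hcodd
  have hq2 : Nat.Coprime (2 ^ h) (2 ^ m - 1) :=
    Nat.Coprime.pow_left h hoddq.coprime_two_left
  rw [Nat.add_sub_cancel]
  exact Nat.Coprime.mul key hq2
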